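/- There exists a constant C > 0 such that the Frobenius norm of the deformed Mertens matrix satisfies ‖M̃_n‖_F ≤ C √n · log(n + 1) for all positive integers n. -/

import Mathlib

/-- The set of approximate divisors of `n`: distinct values of `⌊n/k⌋` for `1 ≤ k ≤ n`. -/
def Sn (n : ℕ) : Finset ℕ := (Finset.Icc 1 n).image (fun k => n / k)

/-- The increasing enumeration `k_1 < ⋯ < k_s` of `S_n` (0-indexed by `Fin s`). -/
noncomputable def kseq (n : ℕ) : Fin (Sn n).card → ℕ :=
  fun i => ((Sn n).orderIsoOfFin rfl i : ℕ)

/-- The real matrix `T` with ones on and above the antidiagonal. -/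
def TmatR (s : ℕ) : Matrix (Fin s) (Fin s) ℝ :=
  fun i j => if (i : ℕ) + (j : ℕ) + 1 ≤ s then 1 else 0

/-- The deformed matrix `Ũ_n`, with entries `n/(k_i k_j)` on and above the
antidiagonal and `0` below it. -/
noncomputable def Utilde (n : ℕ) : Matrix (Fin (Sn n).card) (Fin (Sn n).card) ℝ :=
  fun i j => if (i : ℕ) + (j : ℕ) + 1 ≤ (Sn n).card then
    (n : ℝ) / ((kseq n i : ℝ) * (kseq n j : ℝ)) else 0

/-- The deformed Mertens matrix `M̃_n = T Ũ_n⁻¹ T`. -/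
noncomputable def Mtilde (n : ℕ) : Matrix (Fin (Sn n).card) (Fin (Sn n).card) ℝ :=
  TmatR (Sn n).card * (Utilde n)⁻¹ * TmatR (Sn n).card

section basic
variable {n m : ℕ}

lemma mem_Sn : m ∈ Sn n ↔ ∃ k, (1 ≤ k ∧ k ≤ n) ∧ n / k = m := by
  simp [Sn, Finset.mem_image, Finset.mem_Icc]

lemma Sn_one_le (hm : m ∈ Sn n) : 1 ≤ m := by
  obtain ⟨k, ⟨hk1, hk2⟩, rfl⟩ := mem_Sn.1 hm
  exact Nat.one_le_div_iff (by omega) |>.2 hk2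

lemma Sn_le_n (hm : m ∈ Sn n) : m ≤ n := by
  obtain ⟨k, ⟨hk1, hk2⟩, rfl⟩ := mem_Sn.1 hm
  exact Nat.div_le_self n k

lemma div_mem_Sn (hm : m ∈ Sn n) : n / m ∈ Sn n :=
  mem_Sn.2 ⟨m, ⟨Sn_one_le hm, Sn_le_n hm⟩, rfl⟩

lemma one_mem_Sn (hn : 0 < n) : 1 ∈ Sn n :=
  mem_Sn.2 ⟨n, ⟨hn, le_rfl⟩, Nat.div_self hn⟩

lemma n_mem_Sn (hn : 0 < n) : n ∈ Sn n :=
  mem_Sn.2 ⟨1, ⟨le_rfl, hn⟩, Nat.div_one n⟩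

lemma Sn_invol (hm : m ∈ Sn n) : n / (n / m) = m := by
  obtain ⟨k, ⟨hk1, hk2⟩, rfl⟩ := mem_Sn.1 hm
  set m := n / k with hmdef
  have hm1 : 1 ≤ m := Nat.one_le_div_iff (by omega) |>.2 hk2
  set j := n / m with hjdef
  have hj1 : 1 ≤ j := Nat.one_le_div_iff (by omega) |>.2 (Nat.div_le_self n k)
  have hkj : k ≤ j := Nat.le_div_iff_mul_le (by omega) |>.2
    (by rw [mul_comm]; exact Nat.div_mul_le_self n k)
  refine le_antisymm (Nat.div_le_div_left hkj (by omega)) ?_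
  exact Nat.le_div_iff_mul_le (by omega) |>.2
    (by rw [hjdef, mul_comm]; exact Nat.div_mul_le_self n m)

lemma Sn_strictAntiOn {m' : ℕ} (hm : m ∈ Sn n) (hm' : m' ∈ Sn n) (h : m < m') :
    n / m' < n / m := by
  have hle : n / m' ≤ n / m := Nat.div_le_div_left h.le (Sn_one_le hm)
  rcases hle.lt_or_eq with h' | h'
  · exact h'
  · exfalso
    have h1 := Sn_invol hm
    have h2 := Sn_invol hm'
    rw [h'] at h2
    omega

end basic

section kseqfacts
variable {n : ℕ}

lemma kseq_eq_emb : kseq n = ((Sn n).orderEmbOfFin rfl : Fin (Sn n).card → ℕ) := by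
  funext i; exact Finset.coe_orderIsoOfFin_apply _ _ _

lemma kseq_mem (i : Fin (Sn n).card) : kseq n i ∈ Sn n := by
  rw [kseq_eq_emb]; exact Finset.orderEmbOfFin_mem _ _ _

lemma kseq_strictMono : StrictMono (kseq n) := by
  rw [kseq_eq_emb]; exact ((Sn n).orderEmbOfFin rfl).strictMono

lemma kseq_surj {m : ℕ} (hm : m ∈ Sn n) : ∃ i, kseq n i = m := by
  rw [kseq_eq_emb]
  have := Finset.range_orderEmbOfFin (Sn n) (rfl : (Sn n).card = (Sn n).card)
  have : m ∈ Set.range ((Sn n).orderEmbOfFin rfl) := by rw [this]; exact_mod_cast hm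
  exact this

lemma kseq_pos (i : Fin (Sn n).card) : 1 ≤ kseq n i := Sn_one_le (kseq_mem i)

lemma kseq_le (i : Fin (Sn n).card) : kseq n i ≤ n := Sn_le_n (kseq_mem i)

/-- reflection: `kseq n i.rev = n / kseq n i`. -/
lemma kseq_rev (i : Fin (Sn n).card) : kseq n i.rev = n / kseq n i := by
  have key : (fun j : Fin (Sn n).card => n / kseq n j.rev) = kseq n := by
    rw [kseq_eq_emb]
    refine Finset.orderEmbOfFin_unique rfl (fun j => ?_) ?_
    · exact div_mem_Sn (by rw [← kseq_eq_emb]; exact kseq_mem _)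
    · intro a b hab
      have h1 : b.rev < a.rev := Fin.rev_lt_rev.2 hab
      exact Sn_strictAntiOn (kseq_mem _) (kseq_mem _) (kseq_strictMono h1)
  have h2 : n / kseq n i.rev = kseq n i := congrFun key i
  have h3 := Sn_invol (kseq_mem (n := n) i.rev)
  rw [h2] at h3
  exact h3.symm
end kseqfacts

/-- ℕ-indexed version of `kseq`, with junk value `0` out of range. -/
noncomputable def kk (n m : ℕ) : ℕ := if h : m < (Sn n).card then kseq n ⟨m, h⟩ else 0

section kkfacts
variable {n : ℕ}

lemma kk_of_lt {m : ℕ} (h : m < (Sn n).card) : kk n m = kseq n ⟨m, h⟩ := dif_pos h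

lemma kk_pos {m : ℕ} (h : m < (Sn n).card) : 1 ≤ kk n m := by
  rw [kk_of_lt h]; exact kseq_pos _

lemma kk_le {m : ℕ} (h : m < (Sn n).card) : kk n m ≤ n := by
  rw [kk_of_lt h]; exact kseq_le _

lemma kk_mem {m : ℕ} (h : m < (Sn n).card) : kk n m ∈ Sn n := by
  rw [kk_of_lt h]; exact kseq_mem _

lemma kk_strictMono {a b : ℕ} (hab : a < b) (hb : b < (Sn n).card) : kk n a < kk n b := by
  rw [kk_of_lt (lt_trans hab hb), kk_of_lt hb]
  exact kseq_strictMono (by exact hab)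

lemma kk_mono {a b : ℕ} (hab : a ≤ b) (hb : b < (Sn n).card) : kk n a ≤ kk n b := by
  rcases hab.lt_or_eq with h | h
  · exact (kk_strictMono h hb).le
  · rw [h]

lemma kk_rev {m : ℕ} (h : m < (Sn n).card) :
    kk n ((Sn n).card - 1 - m) = n / kk n m := by
  rw [kk_of_lt (by omega), kk_of_lt h]
  have h2 := kseq_rev (n := n) ⟨m, h⟩
  simp only [Fin.rev] at h2
  simp only [show (Sn n).card - 1 - m = (Sn n).card - (m + 1) from by omega]
  exact h2

lemma kk_zero (hn : 0 < n) : kk n 0 = 1 := by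
  have hcard : 0 < (Sn n).card := Finset.card_pos.2 ⟨1, one_mem_Sn hn⟩
  rw [kk_of_lt hcard]
  refine le_antisymm ?_ (kseq_pos _)
  obtain ⟨i, hi⟩ := kseq_surj (one_mem_Sn hn)
  calc kseq n ⟨0, hcard⟩ ≤ kseq n i := kseq_strictMono.monotone (Fin.le_def.2 (Nat.zero_le _))
  _ = 1 := hi

lemma kk_last (hn : 0 < n) : kk n ((Sn n).card - 1) = n := by
  have hcard : 0 < (Sn n).card := Finset.card_pos.2 ⟨1, one_mem_Sn hn⟩
  rw [kk_of_lt (by omega)]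
  refine le_antisymm (kseq_le _) ?_
  obtain ⟨i, hi⟩ := kseq_surj (n_mem_Sn hn)
  calc n = kseq n i := hi.symm
  _ ≤ kseq n ⟨(Sn n).card - 1, by omega⟩ :=
      kseq_strictMono.monotone (by exact Fin.le_def.2 (by simp; omega))

/-- product with reflected index is at most n -/
lemma kk_mul_rev_le {m : ℕ} (h : m < (Sn n).card) :
    kk n m * kk n ((Sn n).card - 1 - m) ≤ n := by
  rw [kk_rev h]
  exact Nat.mul_div_le n (kk n m)

/-- consecutive ratio bound: `kk n (m+1) ≤ 4 * kk n m`. -/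
lemma kk_ratio {m : ℕ} (h : m + 1 < (Sn n).card) : kk n (m + 1) ≤ 4 * kk n m := by
  have hn : 0 < n := by
    by_contra hn
    have : n = 0 := by omega
    subst this
    simp [Sn] at h
  set s := (Sn n).card with hs
  set mv := kk n (m+1) with hmv
  have hmvmem : mv ∈ Sn n := kk_mem h
  have hmv2 : 2 ≤ mv := by
    have h1 := kk_pos (show m < s by omega)
    have h2 := kk_strictMono (show m < m + 1 by omega) h
    omega
  have hmvn : mv ≤ n := Sn_le_n hmvmem
  set K := n / mv with hK
  have hK1 : 1 ≤ K := Nat.one_le_div_iff (by omega) |>.2 hmvn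
  have hKn : K + 1 ≤ n := by
    have : K ≤ n / 2 := Nat.div_le_div_left hmv2 (by omega)
    have : n / 2 < n := Nat.div_lt_self hn (by omega)
    omega
  have hinv : n / K = mv := Sn_invol hmvmem
  set m' := n / (K + 1) with hm'
  have hm'mem : m' ∈ Sn n := mem_Sn.2 ⟨K + 1, ⟨by omega, hKn⟩, rfl⟩
  have hm'1 : 1 ≤ m' := Sn_one_le hm'mem
  -- m' < mv
  have hm'lt : m' < mv := by
    rw [hm']
    rw [Nat.div_lt_iff_lt_mul (by omega)]
    have e1 : mv * (K + 1) = mv * (n / mv) + mv := by rw [hK]; ring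
    have e2 := Nat.div_add_mod n mv
    have e3 := Nat.mod_lt n (show 0 < mv by omega)
    omega
  -- m' ≤ kk n m
  have hm'le : m' ≤ kk n m := by
    obtain ⟨i, hi⟩ := kseq_surj hm'mem
    have : kseq n i < kseq n ⟨m+1, h⟩ := by rw [hi, ← kk_of_lt h]; exact hm'lt
    have hilt : (i : ℕ) < m + 1 := by
      by_contra hcon
      exact absurd (kseq_strictMono.monotone (show (⟨m+1,h⟩ : Fin s) ≤ i by
        exact Fin.le_def.2 (by simpa using by omega))) (by omega)
    rw [kk_of_lt (show m < s by omega)]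
    rw [← hi]
    exact kseq_strictMono.monotone (Fin.le_def.2 (by simpa using by omega))
  -- mv = n / K ≤ 4 m'
  have hkey : mv ≤ 4 * m' := by
    have hlt : n < (m' + 1) * (K + 1) := by
      have e1 : (m' + 1) * (K + 1) = (K + 1) * (n / (K + 1)) + (K + 1) := by rw [hm']; ring
      have e2 := Nat.div_add_mod n (K + 1)
      have e3 := Nat.mod_lt n (show 0 < K + 1 by omega)
      omega
    have h4 : n / K < 4 * m' + 1 := by
      rw [Nat.div_lt_iff_lt_mul (by omega)]
      have hh1 : m' ≤ m' * K := Nat.le_mul_of_pos_right m' (by omega)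
      have hh2 : 1 ≤ m' * K := by
        calc 1 ≤ m' := hm'1
        _ ≤ m' * K := hh1
      nlinarith [hlt, hh1, hh2]
    omega
  calc mv ≤ 4 * m' := hkey
  _ ≤ 4 * kk n m := by omega

end kkfacts

/-- cardinality bound -/
lemma Sn_card_le (n : ℕ) (hn : 0 < n) : (Sn n).card ≤ 2 * Nat.sqrt n := by
  set r := Nat.sqrt n with hr
  have hr1 : 1 ≤ r := Nat.sqrt_pos.2 hn
  have hsub : Sn n ⊆ ((Finset.Icc 1 r).image (fun k => n / k)) ∪ Finset.Icc 1 r := by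
    intro m hm
    obtain ⟨k, ⟨hk1, hk2⟩, rfl⟩ := mem_Sn.1 hm
    rcases le_or_gt k r with h | h
    · exact Finset.mem_union_left _ (Finset.mem_image.2 ⟨k, Finset.mem_Icc.2 ⟨hk1, h⟩, rfl⟩)
    · refine Finset.mem_union_right _ (Finset.mem_Icc.2 ⟨Nat.one_le_div_iff (by omega) |>.2 hk2, ?_⟩)
      calc n / k ≤ n / (r + 1) := Nat.div_le_div_left h (by omega)
      _ ≤ r := by
          rw [Nat.div_le_iff_le_mul_add_pred (by omega)]
          have e1 : r + 1 - 1 = r := by omega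
          rw [e1]
          have h2 : n < (r + 1) * (r + 1) := by
            rw [hr]
            simpa [Nat.succ_eq_add_one] using Nat.lt_succ_sqrt n
          nlinarith [h2]
  calc (Sn n).card ≤ _ := Finset.card_le_card hsub
  _ ≤ ((Finset.Icc 1 r).image (fun k => n / k)).card + (Finset.Icc 1 r).card :=
      Finset.card_union_le _ _
  _ ≤ (Finset.Icc 1 r).card + (Finset.Icc 1 r).card :=
      Nat.add_le_add_right (Finset.card_image_le) _
  _ ≤ 2 * r := by rw [Nat.card_Icc]; omega

/-- inverse of T -/
def Tinv (s : ℕ) : Matrix (Fin s) (Fin s) ℝ :=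
  fun i j => (if (i : ℕ) + (j : ℕ) + 1 = s then 1 else 0) - (if (i : ℕ) + (j : ℕ) = s then 1 else 0)

noncomputable def Dmat (n : ℕ) : Matrix (Fin (Sn n).card) (Fin (Sn n).card) ℝ :=
  Matrix.diagonal (fun i => Real.sqrt n / (kseq n i : ℝ))

noncomputable def Dmat' (n : ℕ) : Matrix (Fin (Sn n).card) (Fin (Sn n).card) ℝ :=
  Matrix.diagonal (fun i => (kseq n i : ℝ) / Real.sqrt n)

lemma sum_fin_ite (s c : ℕ) (x : ℕ → ℝ) :
    (∑ a : Fin s, if (a : ℕ) = c then x (a : ℕ) else 0) = if c < s then x c else 0 := by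
  rw [Fin.sum_univ_eq_sum_range (fun m => if m = c then x m else 0) s]
  rw [Finset.sum_ite_eq' (Finset.range s) c x]
  simp [Finset.mem_range]

lemma T_mul_Tinv (s : ℕ) : TmatR s * Tinv s = 1 := by
  ext i j
  rw [Matrix.mul_apply, Matrix.one_apply]
  have hi := i.isLt
  have hj := j.isLt
  have key : ∀ a : Fin s, TmatR s i a * Tinv s a j =
      (if (a : ℕ) = s - 1 - (j : ℕ) then (if (i : ℕ) ≤ (j : ℕ) then (1:ℝ) else 0) else 0)
      - (if (a : ℕ) = s - (j : ℕ) then (if (i : ℕ) < (j : ℕ) then (1:ℝ) else 0) else 0) := by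
    intro a
    have ha := a.isLt
    simp only [TmatR, Tinv]
    split_ifs <;> first | (exfalso; omega) | norm_num
  rw [Finset.sum_congr rfl (fun a _ => key a), Finset.sum_sub_distrib]
  rw [sum_fin_ite s (s - 1 - (j : ℕ)) (fun _ => if (i : ℕ) ≤ (j : ℕ) then (1:ℝ) else 0)]
  rw [sum_fin_ite s (s - (j : ℕ)) (fun _ => if (i : ℕ) < (j : ℕ) then (1:ℝ) else 0)]
  simp only [Fin.ext_iff]
  split_ifs <;> first | (exfalso; omega) | norm_num

section inverse
variable {n : ℕ}

lemma sqrt_n_pos (hn : 0 < n) : 0 < Real.sqrt n := Real.sqrt_pos.2 (by exact_mod_cast hn)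

lemma kseqR_pos (i : Fin (Sn n).card) : (0:ℝ) < (kseq n i : ℝ) := by
  exact_mod_cast kseq_pos i

lemma Utilde_eq (hn : 0 < n) : Utilde n = Dmat n * TmatR (Sn n).card * Dmat n := by
  ext i j
  simp only [Utilde, Dmat, Matrix.mul_diagonal, Matrix.diagonal_mul, TmatR]
  split_ifs
  · rw [mul_one]
    rw [div_mul_div_comm]
    rw [Real.mul_self_sqrt (by positivity)]
  · simp

lemma D_mul_D' (hn : 0 < n) : Dmat n * Dmat' n = 1 := by
  unfold Dmat Dmat'
  rw [Matrix.diagonal_mul_diagonal]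
  ext i j
  rcases eq_or_ne i j with rfl | hij
  · rw [Matrix.diagonal_apply_eq, Matrix.one_apply_eq]
    have h1 := sqrt_n_pos hn
    have h2 := kseqR_pos (n := n) i
    rw [div_mul_div_comm, mul_comm (Real.sqrt n)]
    exact div_self (by positivity)
  · rw [Matrix.diagonal_apply_ne _ hij, Matrix.one_apply_ne hij]

lemma Utilde_inv (hn : 0 < n) :
    (Utilde n)⁻¹ = Dmat' n * Tinv (Sn n).card * Dmat' n := by
  apply Matrix.inv_eq_right_inv
  rw [Utilde_eq hn]
  calc Dmat n * TmatR (Sn n).card * Dmat n * (Dmat' n * Tinv (Sn n).card * Dmat' n)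
      = Dmat n * (TmatR (Sn n).card * ((Dmat n * Dmat' n) * (Tinv (Sn n).card * Dmat' n))) := by
        simp only [Matrix.mul_assoc]
    _ = Dmat n * (TmatR (Sn n).card * (Tinv (Sn n).card * Dmat' n)) := by
        rw [D_mul_D' hn, Matrix.one_mul]
    _ = Dmat n * ((TmatR (Sn n).card * Tinv (Sn n).card) * Dmat' n) := by
        simp only [Matrix.mul_assoc]
    _ = Dmat n * Dmat' n := by rw [T_mul_Tinv, Matrix.one_mul]
    _ = 1 := D_mul_D' hn

lemma Mtilde_eq (hn : 0 < n) :
    Mtilde n = (TmatR (Sn n).card * Dmat' n) * (Tinv (Sn n).card * (Dmat' n * TmatR (Sn n).card)) := by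
  unfold Mtilde
  rw [Utilde_inv hn]
  simp only [Matrix.mul_assoc]

end inverse

noncomputable def qf (n m : ℕ) : ℝ := (kk n m : ℝ) / Real.sqrt n

section entry
variable {n : ℕ}

lemma qf_nonneg (m : ℕ) : 0 ≤ qf n m := by unfold qf; positivity

lemma qf_fin (b : Fin (Sn n).card) : (kseq n b : ℝ) / Real.sqrt n = qf n (b : ℕ) := by
  unfold qf
  rw [kk_of_lt b.isLt]

lemma qf_mul (hn : 0 < n) (m1 m2 : ℕ) :
    qf n m1 * qf n m2 = ((kk n m1 : ℝ) * (kk n m2 : ℝ)) / n := by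
  unfold qf
  rw [div_mul_div_comm, Real.mul_self_sqrt (by positivity)]

/-- `(v-u)/u ≤ 4 (log v - log u)` when `1 ≤ u ≤ v ≤ 4u`. -/
lemma ratio_log {u v : ℝ} (hu : 1 ≤ u) (huv : u ≤ v) (hv : v ≤ 4 * u) :
    (v - u) / u ≤ 4 * (Real.log v - Real.log u) := by
  have hu0 : (0:ℝ) < u := by linarith
  have hv0 : (0:ℝ) < v := by linarith
  have h1 : Real.log v - Real.log u = Real.log (v / u) := (Real.log_div hv0.ne' hu0.ne').symm
  have h2 : Real.log (u / v) ≤ u / v - 1 := Real.log_le_sub_one_of_pos (by positivity)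
  have h3 : Real.log (u / v) = -Real.log (v / u) := by
    rw [← Real.log_inv (v / u), inv_div]
  have h4 : 1 - u / v ≤ Real.log (v / u) := by rw [h3] at h2; linarith
  have h5 : (v - u) / u ≤ 4 * (1 - u / v) := by
    have e : 4 * (1 - u / v) - (v - u) / u = (v - u) * (4 * u - v) / (u * v) := by
      field_simp
    have : 0 ≤ (v - u) * (4 * u - v) / (u * v) :=
      div_nonneg (mul_nonneg (by linarith) (by linarith)) (by positivity)
    linarith
  calc (v - u) / u ≤ 4 * (1 - u / v) := h5
  _ ≤ 4 * Real.log (v / u) := by linarith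
  _ = 4 * (Real.log v - Real.log u) := by rw [h1]

lemma inner_eq (a j : Fin (Sn n).card) :
    (Tinv (Sn n).card * (Dmat' n * TmatR (Sn n).card)) a j =
      qf n ((Sn n).card - 1 - (a : ℕ)) *
        (if ((Sn n).card - 1 - (a : ℕ)) + (j : ℕ) + 1 ≤ (Sn n).card then 1 else 0)
      - qf n ((Sn n).card - (a : ℕ)) *
        (if ((Sn n).card - (a : ℕ)) + (j : ℕ) + 1 ≤ (Sn n).card then 1 else 0) := by
  have ha := a.isLt
  have hj := j.isLt
  rw [Matrix.mul_apply]
  have key : ∀ b : Fin (Sn n).card,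
      Tinv (Sn n).card a b * ((Dmat' n * TmatR (Sn n).card) b j) =
      (if (b : ℕ) = (Sn n).card - 1 - (a : ℕ) then qf n (b : ℕ) *
          (if (b : ℕ) + (j : ℕ) + 1 ≤ (Sn n).card then (1:ℝ) else 0) else 0)
      - (if (b : ℕ) = (Sn n).card - (a : ℕ) then qf n (b : ℕ) *
          (if (b : ℕ) + (j : ℕ) + 1 ≤ (Sn n).card then (1:ℝ) else 0) else 0) := by
    intro b
    have hb := b.isLt
    simp only [Tinv, Dmat', Matrix.diagonal_mul, TmatR, qf_fin]
    split_ifs <;> first | (exfalso; omega) | ring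
  rw [Finset.sum_congr rfl (fun b _ => key b), Finset.sum_sub_distrib]
  rw [sum_fin_ite (Sn n).card ((Sn n).card - 1 - (a : ℕ))
      (fun m => qf n m * (if m + (j : ℕ) + 1 ≤ (Sn n).card then (1:ℝ) else 0))]
  rw [sum_fin_ite (Sn n).card ((Sn n).card - (a : ℕ))
      (fun m => qf n m * (if m + (j : ℕ) + 1 ≤ (Sn n).card then (1:ℝ) else 0))]
  split_ifs <;> first | (exfalso; omega) | ring

lemma Mtilde_apply (hn : 0 < n) (i j : Fin (Sn n).card) :
    Mtilde n i j = ∑ a ∈ Finset.range (Sn n).card,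
      ((if a ∈ Finset.Icc (j : ℕ) ((Sn n).card - 1 - (i : ℕ))
          then qf n a * qf n ((Sn n).card - 1 - a) else 0)
       - (if a ∈ Finset.Icc ((j : ℕ) + 1) ((Sn n).card - 1 - (i : ℕ))
          then qf n a * qf n ((Sn n).card - a) else 0)) := by
  have hi := i.isLt
  have hj := j.isLt
  rw [Mtilde_eq hn, Matrix.mul_apply]
  have key : ∀ a : Fin (Sn n).card, (TmatR (Sn n).card * Dmat' n) i a *
      (Tinv (Sn n).card * (Dmat' n * TmatR (Sn n).card)) a j =
      (if (a : ℕ) ∈ Finset.Icc (j : ℕ) ((Sn n).card - 1 - (i : ℕ))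
          then qf n (a : ℕ) * qf n ((Sn n).card - 1 - (a : ℕ)) else 0)
      - (if (a : ℕ) ∈ Finset.Icc ((j : ℕ) + 1) ((Sn n).card - 1 - (i : ℕ))
          then qf n (a : ℕ) * qf n ((Sn n).card - (a : ℕ)) else 0) := by
    intro a
    have ha := a.isLt
    rw [inner_eq a j]
    simp only [Dmat', Matrix.mul_diagonal, TmatR, qf_fin, Finset.mem_Icc]
    split_ifs <;> first | (exfalso; omega) | ring
  rw [Finset.sum_congr rfl (fun a _ => key a)]
  rw [Fin.sum_univ_eq_sum_range (fun m =>
      (if m ∈ Finset.Icc (j : ℕ) ((Sn n).card - 1 - (i : ℕ))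
        then qf n m * qf n ((Sn n).card - 1 - m) else 0)
      - (if m ∈ Finset.Icc ((j : ℕ) + 1) ((Sn n).card - 1 - (i : ℕ))
        then qf n m * qf n ((Sn n).card - m) else 0)) (Sn n).card]

end entry

section bound
variable {n : ℕ}

lemma qf_le_one_mul (hn : 0 < n) (a : ℕ) (ha : a < (Sn n).card) :
    qf n a * qf n ((Sn n).card - 1 - a) ≤ 1 := by
  rw [qf_mul hn, div_le_one (by exact_mod_cast hn)]
  exact_mod_cast kk_mul_rev_le ha

lemma qf_mono' {a b : ℕ} (hab : a ≤ b) (hb : b < (Sn n).card) : qf n a ≤ qf n b := by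
  unfold qf
  gcongr
  exact_mod_cast kk_mono hab hb

lemma Bsum_le (hn : 0 < n) :
    ∑ a ∈ Finset.Icc 1 ((Sn n).card - 1),
      (qf n a * qf n ((Sn n).card - a) - qf n a * qf n ((Sn n).card - 1 - a))
      ≤ 4 * Real.log n := by
  have hstep : ∀ a ∈ Finset.Icc 1 ((Sn n).card - 1),
      qf n a * qf n ((Sn n).card - a) - qf n a * qf n ((Sn n).card - 1 - a)
      ≤ 4 * (Real.log (kk n ((Sn n).card - a)) - Real.log (kk n ((Sn n).card - 1 - a))) := by
    intro a ha
    simp only [Finset.mem_Icc] at ha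
    have hcard : 2 ≤ (Sn n).card := by omega
    have h1 : a < (Sn n).card := by omega
    have hu : 1 ≤ kk n ((Sn n).card - 1 - a) := kk_pos (by omega)
    have huv : kk n ((Sn n).card - 1 - a) ≤ kk n ((Sn n).card - a) :=
      kk_mono (by omega) (by omega)
    have hv4 : kk n ((Sn n).card - a) ≤ 4 * kk n ((Sn n).card - 1 - a) := by
      have h := kk_ratio (n := n) (m := (Sn n).card - 1 - a) (by omega)
      have e : (Sn n).card - 1 - a + 1 = (Sn n).card - a := by omega
      rw [e] at h
      exact h
    have hwu : kk n a * kk n ((Sn n).card - 1 - a) ≤ n := kk_mul_rev_le h1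
    have huR : (1:ℝ) ≤ (kk n ((Sn n).card - 1 - a) : ℝ) := by exact_mod_cast hu
    have huvR : ((kk n ((Sn n).card - 1 - a) : ℕ) : ℝ) ≤ ((kk n ((Sn n).card - a) : ℕ) : ℝ) := by
      exact_mod_cast huv
    have hv4R : ((kk n ((Sn n).card - a) : ℕ) : ℝ) ≤ 4 * ((kk n ((Sn n).card - 1 - a) : ℕ) : ℝ) := by
      exact_mod_cast hv4
    have hwuR : ((kk n a : ℕ) : ℝ) * ((kk n ((Sn n).card - 1 - a) : ℕ) : ℝ) ≤ (n:ℝ) := by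
      exact_mod_cast hwu
    have hnR : (0:ℝ) < n := by exact_mod_cast hn
    rw [qf_mul hn, qf_mul hn]
    set u : ℝ := ((kk n ((Sn n).card - 1 - a) : ℕ) : ℝ) with hu'
    set v : ℝ := ((kk n ((Sn n).card - a) : ℕ) : ℝ) with hv'
    set w : ℝ := ((kk n a : ℕ) : ℝ) with hw'
    have hw0 : (0:ℝ) ≤ w := by positivity
    have step1 : w * v / n - w * u / n ≤ (v - u) / u := by
      rw [div_sub_div_same, div_le_div_iff₀ hnR (by linarith)]
      nlinarith [hwuR, huvR, hw0]
    calc w * v / n - w * u / n ≤ (v - u) / u := step1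
    _ ≤ 4 * (Real.log v - Real.log u) := ratio_log huR huvR hv4R
  calc ∑ a ∈ Finset.Icc 1 ((Sn n).card - 1),
      (qf n a * qf n ((Sn n).card - a) - qf n a * qf n ((Sn n).card - 1 - a))
      ≤ ∑ a ∈ Finset.Icc 1 ((Sn n).card - 1),
        4 * (Real.log (kk n ((Sn n).card - a)) - Real.log (kk n ((Sn n).card - 1 - a))) :=
      Finset.sum_le_sum hstep
    _ = 4 * ∑ a ∈ Finset.Icc 1 ((Sn n).card - 1),
        (Real.log (kk n ((Sn n).card - a)) - Real.log (kk n ((Sn n).card - 1 - a))) :=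
      (Finset.mul_sum _ _ _).symm
    _ = 4 * ∑ c ∈ Finset.range ((Sn n).card - 1),
        (Real.log (kk n (c + 1)) - Real.log (kk n c)) := by
      congr 1
      refine Finset.sum_nbij' (fun a => (Sn n).card - 1 - a) (fun c => (Sn n).card - 1 - c)
        ?_ ?_ ?_ ?_ ?_
      · intro a ha
        simp only [Finset.mem_Icc] at ha
        simp only [Finset.mem_range]
        omega
      · intro c hc
        simp only [Finset.mem_range] at hc
        simp only [Finset.mem_Icc]
        omega
      · intro a ha
        simp only [Finset.mem_Icc] at ha
        omega
      · intro c hc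
        simp only [Finset.mem_range] at hc
        omega
      · intro a ha
        simp only [Finset.mem_Icc] at ha
        have e1 : (Sn n).card - 1 - a + 1 = (Sn n).card - a := by omega
        rw [e1]
    _ = 4 * (Real.log (kk n ((Sn n).card - 1)) - Real.log (kk n 0)) := by
      rw [Finset.sum_range_sub (fun c => Real.log (kk n c)) ((Sn n).card - 1)]
    _ = 4 * Real.log n := by
      rw [kk_last hn, kk_zero hn]
      norm_num

lemma abs_Mtilde_le (hn : 0 < n) (i j : Fin (Sn n).card) :
    |Mtilde n i j| ≤ 1 + 4 * Real.log n := by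
  have hi := i.isLt
  have hj := j.isLt
  have hlog : 0 ≤ Real.log n := Real.log_nonneg (by exact_mod_cast hn)
  have hB := Bsum_le hn
  rw [Mtilde_apply hn i j, Finset.sum_sub_distrib]
  have hsub1 : Finset.Icc (j : ℕ) ((Sn n).card - 1 - (i : ℕ)) ⊆ Finset.range (Sn n).card := by
    intro x hx
    simp only [Finset.mem_Icc] at hx
    simp only [Finset.mem_range]
    omega
  have hsub2 : Finset.Icc ((j : ℕ) + 1) ((Sn n).card - 1 - (i : ℕ)) ⊆ Finset.range (Sn n).card := by
    intro x hx
    simp only [Finset.mem_Icc] at hx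
    simp only [Finset.mem_range]
    omega
  rw [Finset.sum_ite_mem, Finset.sum_ite_mem,
    Finset.inter_eq_right.2 hsub1, Finset.inter_eq_right.2 hsub2]
  have hIocIcc : Finset.Icc ((j : ℕ) + 1) ((Sn n).card - 1 - (i : ℕ))
      = Finset.Ioc (j : ℕ) ((Sn n).card - 1 - (i : ℕ)) := by rw [Finset.Icc_add_one_left_eq_Ioc]
  rw [hIocIcc]
  rcases le_or_gt (j : ℕ) ((Sn n).card - 1 - (i : ℕ)) with hjt | hjt
  · rw [Finset.Icc_eq_cons_Ioc hjt, Finset.sum_cons]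
    have h1 : qf n (j : ℕ) * qf n ((Sn n).card - 1 - (j : ℕ)) ≤ 1 := qf_le_one_mul hn _ hj
    have h0 : 0 ≤ qf n (j : ℕ) * qf n ((Sn n).card - 1 - (j : ℕ)) :=
      mul_nonneg (qf_nonneg _) (qf_nonneg _)
    have hdiffsub : ∑ a ∈ Finset.Ioc (j : ℕ) ((Sn n).card - 1 - (i : ℕ)),
          (qf n a * qf n ((Sn n).card - a) - qf n a * qf n ((Sn n).card - 1 - a))
        ≤ ∑ a ∈ Finset.Icc 1 ((Sn n).card - 1),
          (qf n a * qf n ((Sn n).card - a) - qf n a * qf n ((Sn n).card - 1 - a)) := by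
      refine Finset.sum_le_sum_of_subset_of_nonneg ?_ ?_
      · intro x hx
        simp only [Finset.mem_Ioc] at hx
        simp only [Finset.mem_Icc]
        omega
      · intro x hx _
        simp only [Finset.mem_Icc] at hx
        have : qf n ((Sn n).card - 1 - x) ≤ qf n ((Sn n).card - x) :=
          qf_mono' (by omega) (by omega)
        nlinarith [qf_nonneg (n := n) x]
    have hdnonneg : ∀ a ∈ Finset.Ioc (j : ℕ) ((Sn n).card - 1 - (i : ℕ)),
        0 ≤ qf n a * qf n ((Sn n).card - a) - qf n a * qf n ((Sn n).card - 1 - a) := by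
      intro x hx
      simp only [Finset.mem_Ioc] at hx
      have : qf n ((Sn n).card - 1 - x) ≤ qf n ((Sn n).card - x) :=
        qf_mono' (by omega) (by omega)
      nlinarith [qf_nonneg (n := n) x]
    have hsplit : ∑ a ∈ Finset.Ioc (j : ℕ) ((Sn n).card - 1 - (i : ℕ)),
          qf n a * qf n ((Sn n).card - a)
        - ∑ a ∈ Finset.Ioc (j : ℕ) ((Sn n).card - 1 - (i : ℕ)),
          qf n a * qf n ((Sn n).card - 1 - a)
        = ∑ a ∈ Finset.Ioc (j : ℕ) ((Sn n).card - 1 - (i : ℕ)),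
          (qf n a * qf n ((Sn n).card - a) - qf n a * qf n ((Sn n).card - 1 - a)) :=
      (Finset.sum_sub_distrib _ _).symm
    rw [abs_le]
    constructor
    · have hd : 0 ≤ ∑ a ∈ Finset.Ioc (j : ℕ) ((Sn n).card - 1 - (i : ℕ)),
          (qf n a * qf n ((Sn n).card - a) - qf n a * qf n ((Sn n).card - 1 - a)) :=
        Finset.sum_nonneg hdnonneg
      linarith [hsplit, hdiffsub, hB]
    · linarith [hsplit, hdiffsub, hB,
        Finset.sum_nonneg hdnonneg]
  · rw [Finset.Icc_eq_empty (by omega), Finset.Ioc_eq_empty (by omega)]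
    simp only [Finset.sum_empty, sub_zero, abs_zero]
    linarith

end bound

/-- The Frobenius norm of the deformed Mertens matrix satisfies `‖M̃_n‖_F ≤ C √n log(n+1)`. -/
theorem stmt_19 :
    ∃ C : ℝ, 0 < C ∧ ∀ n : ℕ, 0 < n →
      Real.sqrt (∑ i, ∑ j, (Mtilde n i j) ^ 2) ≤ C * Real.sqrt n * Real.log (n + 1) := by
  refine ⟨12, by norm_num, ?_⟩
  intro n hn
  have hn1 : (1:ℝ) ≤ (n:ℝ) := by exact_mod_cast hn
  have hlogn : 0 ≤ Real.log n := Real.log_nonneg hn1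
  have hlogsucc : Real.log n ≤ Real.log (n + 1) := by
    rw [Real.log_le_log_iff (by linarith) (by linarith)]
    linarith
  have hlog1 : (1:ℝ) ≤ 2 * Real.log (n + 1) := by
    have h2 : Real.log 2 ≤ Real.log (n + 1) := by
      rw [Real.log_le_log_iff (by norm_num) (by linarith)]
      linarith
    have h3 := Real.log_two_gt_d9
    linarith
  have hE0 : 0 ≤ 1 + 4 * Real.log n := by linarith
  have hEsq : ∀ i j : Fin (Sn n).card, (Mtilde n i j) ^ 2 ≤ (1 + 4 * Real.log n) ^ 2 := by
    intro i j
    have h := abs_Mtilde_le hn i j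
    have h2 := abs_nonneg (Mtilde n i j)
    calc (Mtilde n i j) ^ 2 = |Mtilde n i j| ^ 2 := (sq_abs _).symm
    _ ≤ (1 + 4 * Real.log n) ^ 2 := by nlinarith
  have hsum : (∑ i, ∑ j, (Mtilde n i j) ^ 2)
      ≤ (((Sn n).card : ℝ) * (1 + 4 * Real.log n)) ^ 2 := by
    calc (∑ i, ∑ j, (Mtilde n i j) ^ 2)
        ≤ ∑ _i : Fin (Sn n).card, ∑ _j : Fin (Sn n).card, (1 + 4 * Real.log n) ^ 2 :=
        Finset.sum_le_sum (fun i _ => Finset.sum_le_sum (fun j _ => hEsq i j))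
    _ = ((Sn n).card : ℝ) * (((Sn n).card : ℝ) * (1 + 4 * Real.log n) ^ 2) := by
        simp [Finset.sum_const, Finset.card_univ]
    _ = (((Sn n).card : ℝ) * (1 + 4 * Real.log n)) ^ 2 := by ring
  have hsqrt : Real.sqrt (∑ i, ∑ j, (Mtilde n i j) ^ 2)
      ≤ ((Sn n).card : ℝ) * (1 + 4 * Real.log n) := by
    calc Real.sqrt (∑ i, ∑ j, (Mtilde n i j) ^ 2)
        ≤ Real.sqrt ((((Sn n).card : ℝ) * (1 + 4 * Real.log n)) ^ 2) := Real.sqrt_le_sqrt hsum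
    _ = ((Sn n).card : ℝ) * (1 + 4 * Real.log n) := Real.sqrt_sq (by positivity)
  have hcard : ((Sn n).card : ℝ) ≤ 2 * Real.sqrt n := by
    have h1 : (Sn n).card ≤ 2 * Nat.sqrt n := Sn_card_le n hn
    have h2 : ((Nat.sqrt n : ℕ) : ℝ) ≤ Real.sqrt n := Real.nat_sqrt_le_real_sqrt
    calc ((Sn n).card : ℝ) ≤ ((2 * Nat.sqrt n : ℕ) : ℝ) := by exact_mod_cast h1
    _ = 2 * ((Nat.sqrt n : ℕ) : ℝ) := by push_cast; ring
    _ ≤ 2 * Real.sqrt n := by linarith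
  have hElog : 1 + 4 * Real.log n ≤ 6 * Real.log (n + 1) := by linarith
  calc Real.sqrt (∑ i, ∑ j, (Mtilde n i j) ^ 2)
      ≤ ((Sn n).card : ℝ) * (1 + 4 * Real.log n) := hsqrt
  _ ≤ (2 * Real.sqrt n) * (6 * Real.log (n + 1)) :=
      mul_le_mul hcard hElog hE0 (by positivity)
  _ = 12 * Real.sqrt n * Real.log (n + 1) := by ring
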